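/- (Multilinear majorant bound) Suppose φ: ℝ^{κn} → ℂ has an integrable radially decreasing majorant Φ (i.e., |φ(y)| ≤ Φ(y), Φ(y) = Φ_0(|y|) with Φ_0 nonincreasing and Φ ∈ L^1(ℝ^{κn})). Set φ_t(y) = t^{−κn} φ(y/t). Then for all locally integrable f_1,...,f_κ on ℝ^n and every x ∈ ℝ^n, sup_{t>0} |((f_1 ⊗ ⋯ ⊗ f_κ) ∗ φ_t)(x,...,x)| ≤ ‖Φ‖_{L^1(ℝ^{κn})} · M^κ(f_1,...,f_κ)(x), where M^κ is the multilinear Hardy–Littlewood maximal operator and (x,...,x) ∈ (ℝ^n)^κ. -/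

import Mathlib

open MeasureTheory Measure Set Metric
open scoped ENNReal NNReal

/-- The `i`-th block in `ℝ^n` of a point of `ℝ^{κn} = (ℝ^n)^κ`. -/
def block {n κ : ℕ} (y : EuclideanSpace ℝ (Fin κ × Fin n)) (i : Fin κ) :
    EuclideanSpace ℝ (Fin n) := WithLp.toLp 2 (fun j => y (i, j))

/-- The multilinear Hardy–Littlewood maximal operator
`M^κ(f₁,...,f_κ)(x) = sup_{t>0} (1/v_{κn}) ∫_{B^{κn}} ∏ᵢ |fᵢ(x - t yᵢ)| dy`. -/
noncomputable def multiHLMax {n κ : ℕ}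
    (f : Fin κ → EuclideanSpace ℝ (Fin n) → ℂ) (x : EuclideanSpace ℝ (Fin n)) : ℝ≥0∞ :=
  ⨆ t > (0 : ℝ),
    (volume (Metric.ball (0 : EuclideanSpace ℝ (Fin κ × Fin n)) 1))⁻¹ *
      ∫⁻ y in Metric.ball (0 : EuclideanSpace ℝ (Fin κ × Fin n)) 1,
        ∏ i, (‖f i (x - t • block y i)‖₊ : ℝ≥0∞)

lemma block_smul {n κ : ℕ} (t : ℝ) (y : EuclideanSpace ℝ (Fin κ × Fin n)) (i : Fin κ) :
    block (t • y) i = t • block y i := rfl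

lemma block_qmp {n κ : ℕ} (i : Fin κ) :
    Measure.QuasiMeasurePreserving
      (fun y : EuclideanSpace ℝ (Fin κ × Fin n) => block y i) volume volume := by
  classical
  set p : Fin κ × Fin n → Prop := fun j => j.1 = i with hp
  let f : {j : Fin κ × Fin n // p j} ≃ Fin n :=
    { toFun := fun s => s.1.2
      invFun := fun j => ⟨(i, j), rfl⟩
      left_inv := by
        rintro ⟨⟨i', j⟩, h⟩
        simp only [p] at h
        subst h
        rfl
      right_inv := fun j => rfl }
  have h1 := (EuclideanSpace.volume_preserving_symm_measurableEquiv_toLp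
    (Fin κ × Fin n)).quasiMeasurePreserving
  have h2 := (MeasureTheory.volume_preserving_piEquivPiSubtypeProd
    (fun _ : Fin κ × Fin n => ℝ) p).quasiMeasurePreserving
  have h3 : Measure.QuasiMeasurePreserving
      (Prod.fst : (({j // p j} → ℝ) × ({j // ¬ p j} → ℝ)) → ({j // p j} → ℝ))
      volume volume := by
    rw [Measure.volume_eq_prod]
    exact Measure.quasiMeasurePreserving_fst
  have h4 := (MeasureTheory.volume_measurePreserving_piCongrLeft
    (fun _ : Fin n => ℝ) f).quasiMeasurePreserving
  have h5 := (PiLp.volume_preserving_toLp (Fin n)).quasiMeasurePreserving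
  have H := (((h5.comp h4).comp h3).comp h2).comp h1
  exact H

lemma qmp_affine {n κ : ℕ} (i : Fin κ) {t : ℝ} (ht : t ≠ 0) (x : EuclideanSpace ℝ (Fin n)) :
    Measure.QuasiMeasurePreserving
      (fun y : EuclideanSpace ℝ (Fin κ × Fin n) => x - t • block y i) volume volume := by
  have h2 : Measure.QuasiMeasurePreserving
      (fun w : EuclideanSpace ℝ (Fin n) => t • w) volume volume :=
    Measure.quasiMeasurePreserving_smul volume ht
  have h3 := (measurePreserving_sub_left
    (volume : Measure (EuclideanSpace ℝ (Fin n))) x).quasiMeasurePreserving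
  exact (h3.comp h2).comp (block_qmp i)

lemma lintegral_comp_smul_eq {ι : Type*} [Fintype ι] {c : ℝ} (hc : 0 < c)
    (g : EuclideanSpace ℝ ι → ℝ≥0∞) :
    ∫⁻ z, g (c • z) = ENNReal.ofReal ((c ^ Module.finrank ℝ (EuclideanSpace ℝ ι))⁻¹)
      * ∫⁻ y, g y := by
  set d := Module.finrank ℝ (EuclideanSpace ℝ ι) with hd
  have hcd : (0:ℝ) < c ^ d := pow_pos hc d
  let u : ℝˣ := (isUnit_iff_ne_zero.2 hc.ne').unit
  let e : EuclideanSpace ℝ ι ≃ᵐ EuclideanSpace ℝ ι :=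
    (Homeomorph.smul u).toMeasurableEquiv
  have hco : ∀ z, e z = c • z := by
    intro z
    show u • z = c • z
    rw [Units.smul_def, IsUnit.unit_spec]
  have hmap := Measure.map_addHaar_smul (volume : Measure (EuclideanSpace ℝ ι)) hc.ne'
  calc ∫⁻ z, g (c • z) = ∫⁻ z, g (e z) := by simp only [hco]
    _ = ∫⁻ y, g y ∂(Measure.map e volume) := (MeasureTheory.lintegral_map_equiv g e).symm
    _ = ∫⁻ y, g y ∂(Measure.map (fun z => c • z) volume) := by
        exact congrArg (fun m => ∫⁻ y, g y ∂m)
          (congrArg (fun F => Measure.map F volume) (funext hco))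
    _ = ENNReal.ofReal ((c ^ d)⁻¹) * ∫⁻ y, g y := by
        rw [hmap, lintegral_smul_measure, abs_of_pos (inv_pos.2 hcd), smul_eq_mul]

lemma lintegral_eq_smul_comp {ι : Type*} [Fintype ι] {c : ℝ} (hc : 0 < c)
    (g : EuclideanSpace ℝ ι → ℝ≥0∞) :
    ∫⁻ y, g y = ENNReal.ofReal (c ^ Module.finrank ℝ (EuclideanSpace ℝ ι))
      * ∫⁻ z, g (c • z) := by
  rw [lintegral_comp_smul_eq hc g, ← mul_assoc, ← ENNReal.ofReal_mul (by positivity),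
    mul_inv_cancel₀ (by positivity), ENNReal.ofReal_one, one_mul]

lemma key_bound {n κ : ℕ} (hn : 1 ≤ n) (hκ : 1 ≤ κ)
    (Φ : EuclideanSpace ℝ (Fin κ × Fin n) → ℝ) (Φ₀ : ℝ → ℝ)
    (hrad : ∀ y, Φ y = Φ₀ ‖y‖)
    (hdecr : ∀ a b : ℝ, 0 ≤ a → a ≤ b → Φ₀ b ≤ Φ₀ a)
    (hΦ0 : ∀ y, 0 ≤ Φ y)
    (hΦm : Measurable Φ) (hΦfin : ∫⁻ y, ENNReal.ofReal (Φ y) ≠ ∞)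
    (f : Fin κ → EuclideanSpace ℝ (Fin n) → ℂ)
    (hf : ∀ i, LocallyIntegrable (f i) volume) (x : EuclideanSpace ℝ (Fin n))
    {t : ℝ} (ht : 0 < t) :
    ∫⁻ z, (∏ i, (‖f i (x - t • block z i)‖₊ : ℝ≥0∞)) * ENNReal.ofReal (Φ z)
      ≤ (∫⁻ y, ENNReal.ofReal (Φ y)) * multiHLMax f x := by
  classical
  have hd : Module.finrank ℝ (EuclideanSpace ℝ (Fin κ × Fin n)) = κ * n := by
    simp [finrank_euclideanSpace]
  have hdpos : 0 < κ * n := Nat.mul_pos hκ hn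
  haveI : Nontrivial (EuclideanSpace ℝ (Fin κ × Fin n)) :=
    Module.nontrivial_of_finrank_pos (R := ℝ) (by rw [hd]; exact hdpos)
  set G : EuclideanSpace ℝ (Fin κ × Fin n) → ℝ≥0∞ :=
    fun z => ∏ i, (‖f i (x - t • block z i)‖₊ : ℝ≥0∞) with hGdef
  have hG : AEMeasurable G volume := by
    refine Finset.aemeasurable_fun_prod _ fun i _ => ?_
    exact ((hf i).aestronglyMeasurable.enorm).comp_quasiMeasurePreserving
      (qmp_affine i ht.ne' x)
  have hGfin : ∀ z, G z ≠ ∞ := fun z =>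
    (ENNReal.prod_lt_top (fun i _ => ENNReal.coe_lt_top)).ne
  set M := multiHLMax f x with hM
  set B1 : Set (EuclideanSpace ℝ (Fin κ × Fin n)) := Metric.ball 0 1 with hB1
  have hB1pos : (0:ℝ≥0∞) < volume B1 := measure_ball_pos _ _ one_pos
  have hB1fin : volume B1 < ∞ := measure_ball_lt_top
  -- averaging bound
  have havg : ∀ u : ℝ, 0 < u →
      ∫⁻ w in B1, ∏ i, (‖f i (x - u • block w i)‖₊ : ℝ≥0∞) ≤ volume B1 * M := by
    intro u hu
    have h1 : (volume B1)⁻¹ * ∫⁻ w in B1, ∏ i, (‖f i (x - u • block w i)‖₊ : ℝ≥0∞) ≤ M := by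
      rw [hM, multiHLMax]
      exact le_iSup₂ (f := fun (u : ℝ) (_ : u > 0) =>
        (volume B1)⁻¹ * ∫⁻ w in B1, ∏ i, (‖f i (x - u • block w i)‖₊ : ℝ≥0∞)) u hu
    calc ∫⁻ w in B1, ∏ i, (‖f i (x - u • block w i)‖₊ : ℝ≥0∞)
        = volume B1 * ((volume B1)⁻¹
            * ∫⁻ w in B1, ∏ i, (‖f i (x - u • block w i)‖₊ : ℝ≥0∞)) := by
          rw [← mul_assoc, ENNReal.mul_inv_cancel hB1pos.ne' hB1fin.ne, one_mul]
      _ ≤ volume B1 * M := mul_le_mul_right h1 _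
  -- core bound
  have core : ∀ s : ℝ, 0 < s →
      ∫⁻ z in {z | s < Φ z}, G z ≤ volume {z | s < Φ z} * M := by
    intro s hs
    set Es := {z : EuclideanSpace ℝ (Fin κ × Fin n) | s < Φ z} with hEs
    have hdc : ∀ z ∈ Es, ∀ w, ‖w‖ ≤ ‖z‖ → w ∈ Es := by
      intro z hz w hw
      have h1 : Φ₀ ‖z‖ ≤ Φ₀ ‖w‖ := hdecr _ _ (norm_nonneg w) hw
      have hz' : s < Φ₀ ‖z‖ := by rw [← hrad z]; exact hz
      show s < Φ w
      rw [hrad w]; exact lt_of_lt_of_le hz' h1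
    have hEfin : volume Es < ∞ := by
      have hsub : Es ⊆ {z | ENNReal.ofReal s ≤ ENNReal.ofReal (Φ z)} := fun z hz =>
        ENNReal.ofReal_le_ofReal (le_of_lt hz)
      calc volume Es ≤ volume {z | ENNReal.ofReal s ≤ ENNReal.ofReal (Φ z)} :=
            measure_mono hsub
        _ ≤ (∫⁻ z, ENNReal.ofReal (Φ z)) / ENNReal.ofReal s :=
            meas_ge_le_lintegral_div (hΦm.ennreal_ofReal.aemeasurable)
              (by simp [ENNReal.ofReal_eq_zero, not_le, hs]) ENNReal.ofReal_ne_top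
        _ < ∞ := ENNReal.div_lt_top hΦfin (by simp [ENNReal.ofReal_eq_zero, not_le, hs])
    rcases Set.eq_empty_or_nonempty Es with hE | hE
    · have hE' : Es = ∅ := hE
      rw [hE']; simp
    have hbdd : BddAbove (norm '' Es) := by
      by_contra hb
      obtain ⟨m, hm⟩ := ENNReal.exists_nat_gt (ENNReal.div_lt_top hEfin.ne hB1pos.ne').ne
      have h1 : volume Es < (m : ℝ≥0∞) * volume B1 := by
        rwa [ENNReal.div_lt_iff (Or.inl hB1pos.ne') (Or.inl hB1fin.ne)] at hm
      have hball : Metric.ball (0 : EuclideanSpace ℝ (Fin κ × Fin n)) (m + 1) ⊆ Es := by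
        intro w hw
        obtain ⟨v, ⟨z, hz, rfl⟩, hlt⟩ := not_bddAbove_iff.1 hb (m + 1)
        exact hdc z hz w ((mem_ball_zero_iff.1 hw).le.trans hlt.le)
      have h2 : (m : ℝ≥0∞) * volume B1
          ≤ volume (Metric.ball (0 : EuclideanSpace ℝ (Fin κ × Fin n)) (m + 1)) := by
        rw [Measure.addHaar_ball volume 0 (by positivity : (0:ℝ) ≤ (m : ℝ) + 1), hd]
        refine mul_le_mul_left ?_ _
        rw [← ENNReal.ofReal_natCast m]
        refine ENNReal.ofReal_le_ofReal ?_
        calc (m : ℝ) ≤ (m : ℝ) + 1 := by linarith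
          _ ≤ ((m : ℝ) + 1) ^ (κ * n) :=
            le_self_pow₀ (by linarith [Nat.cast_nonneg (α := ℝ) m]) hdpos.ne'
      exact absurd ((h2.trans (measure_mono hball)).trans_lt h1) (lt_irrefl _).elim
    have hnormne : (norm '' Es).Nonempty := hE.image _
    set r := sSup (norm '' Es) with hr
    obtain ⟨z₀, hz₀⟩ := hE
    have hr0 : 0 ≤ r := le_trans (norm_nonneg z₀) (le_csSup hbdd ⟨z₀, hz₀, rfl⟩)
    have hsub1 : Es ⊆ Metric.closedBall 0 r := fun z hz =>
      mem_closedBall_zero_iff.2 (le_csSup hbdd ⟨z, hz, rfl⟩)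
    have hsub2 : Metric.ball 0 r ⊆ Es := by
      intro w hw
      obtain ⟨v, ⟨z, hz, rfl⟩, hlt⟩ := exists_lt_of_lt_csSup hnormne (mem_ball_zero_iff.1 hw)
      exact hdc z hz w hlt.le
    rcases hr0.eq_or_lt with hr0' | hrpos
    · have hnull : volume Es = 0 := by
        refine measure_mono_null hsub1 ?_
        rw [← hr0']
        simp [Metric.closedBall_zero]
      rw [Measure.restrict_eq_zero.2 hnull]
      simp
    -- main case: r > 0
    have haeball : Metric.closedBall (0 : EuclideanSpace ℝ (Fin κ × Fin n)) r
        =ᵐ[volume] Metric.ball (0 : EuclideanSpace ℝ (Fin κ × Fin n)) r := by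
      rw [← Metric.ball_union_sphere]
      exact MeasureTheory.union_ae_eq_left_of_ae_eq_empty
        (ae_eq_empty.2 (Measure.addHaar_sphere volume 0 r))
    calc ∫⁻ z in Es, G z
        ≤ ∫⁻ z in Metric.closedBall 0 r, G z :=
          lintegral_mono' (Measure.restrict_mono hsub1 le_rfl) le_rfl
      _ = ∫⁻ z in Metric.ball 0 r, G z := by rw [Measure.restrict_congr_set haeball]
      _ = ∫⁻ z, (Metric.ball (0 : EuclideanSpace ℝ (Fin κ × Fin n)) r).indicator G z :=
          (lintegral_indicator measurableSet_ball G).symm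
      _ = ENNReal.ofReal (r ^ (κ * n)) * ∫⁻ w,
            (Metric.ball (0 : EuclideanSpace ℝ (Fin κ × Fin n)) r).indicator G (r • w) := by
          rw [← hd]; exact lintegral_eq_smul_comp hrpos _
      _ = ENNReal.ofReal (r ^ (κ * n)) * ∫⁻ w,
            (Metric.ball (0 : EuclideanSpace ℝ (Fin κ × Fin n)) 1).indicator
              (fun w => G (r • w)) w := by
          congr 1
          refine lintegral_congr fun w => ?_
          by_cases hw : w ∈ Metric.ball (0 : EuclideanSpace ℝ (Fin κ × Fin n)) 1
          · rw [Set.indicator_of_mem hw, Set.indicator_of_mem]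
            rw [mem_ball_zero_iff] at hw ⊢
            rw [norm_smul, Real.norm_of_nonneg hr0]
            nlinarith [norm_nonneg w]
          · rw [Set.indicator_of_notMem hw, Set.indicator_of_notMem]
            rw [mem_ball_zero_iff] at hw ⊢
            rw [norm_smul, Real.norm_of_nonneg hr0]
            intro hcon
            exact hw (by nlinarith [norm_nonneg w])
      _ = ENNReal.ofReal (r ^ (κ * n)) * ∫⁻ w in B1, G (r • w) := by
          rw [lintegral_indicator measurableSet_ball]
      _ ≤ ENNReal.ofReal (r ^ (κ * n)) * (volume B1 * M) := by
          refine mul_le_mul_right ?_ _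
          have : ∀ w, G (r • w) = ∏ i, (‖f i (x - (t * r) • block w i)‖₊ : ℝ≥0∞) := by
            intro w
            rw [hGdef]
            refine Finset.prod_congr rfl fun i _ => ?_
            rw [block_smul, smul_smul]
          rw [show (fun w => G (r • w)) = fun w =>
            ∏ i, (‖f i (x - (t * r) • block w i)‖₊ : ℝ≥0∞) from funext this]
          exact havg (t * r) (mul_pos ht hrpos)
      _ ≤ volume Es * M := by
          rw [← mul_assoc]
          refine mul_le_mul_left ?_ _
          calc ENNReal.ofReal (r ^ (κ * n)) * volume B1
              = volume (Metric.ball (0 : EuclideanSpace ℝ (Fin κ × Fin n)) r) := by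
                rw [Measure.addHaar_ball volume 0 hr0, hd]
            _ ≤ volume Es := measure_mono hsub2
  -- layer cake + Tonelli
  have hpointwise : ∀ z, G z * ENNReal.ofReal (Φ z)
      = ∫⁻ s in Set.Ioi (0:ℝ), G z * (Set.Iio (Φ z)).indicator (fun _ => (1:ℝ≥0∞)) s := by
    intro z
    have h1 : ∫⁻ s in Set.Ioi (0:ℝ), (Set.Iio (Φ z)).indicator (fun _ => (1:ℝ≥0∞)) s
        = ENNReal.ofReal (Φ z) := by
      have h2 := lintegral_indicator_one (μ := volume.restrict (Set.Ioi (0:ℝ)))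
        (measurableSet_Iio (a := Φ z))
      rw [Measure.restrict_apply measurableSet_Iio, Set.Iio_inter_Ioi, Real.volume_Ioo,
        sub_zero] at h2
      exact h2
    rw [← h1, lintegral_const_mul' _ _ (hGfin z)]
  have hmeasset : ∀ s : ℝ, MeasurableSet {z : EuclideanSpace ℝ (Fin κ × Fin n) | s < Φ z} :=
    fun s => measurableSet_lt measurable_const hΦm
  calc ∫⁻ z, G z * ENNReal.ofReal (Φ z)
      = ∫⁻ z, ∫⁻ s in Set.Ioi (0:ℝ), G z * (Set.Iio (Φ z)).indicator (fun _ => 1) s :=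
        lintegral_congr hpointwise
    _ = ∫⁻ s in Set.Ioi (0:ℝ), ∫⁻ z, G z * (Set.Iio (Φ z)).indicator (fun _ => 1) s := by
        refine lintegral_lintegral_swap ?_
        have hset : MeasurableSet {q : EuclideanSpace ℝ (Fin κ × Fin n) × ℝ | q.2 < Φ q.1} :=
          measurableSet_lt measurable_snd (hΦm.comp measurable_fst)
        have huncurry : Function.uncurry
            (fun z s => G z * (Set.Iio (Φ z)).indicator (fun _ => (1:ℝ≥0∞)) s)
            = fun q : EuclideanSpace ℝ (Fin κ × Fin n) × ℝ =>
              G q.1 * Set.indicator {q : EuclideanSpace ℝ (Fin κ × Fin n) × ℝ | q.2 < Φ q.1}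
                (fun _ => 1) q := by
          funext q
          rcases q with ⟨z, s⟩
          by_cases h : s < Φ z <;>
            simp [Function.uncurry, Set.indicator_apply, h]
        rw [huncurry]
        exact (hG.comp_quasiMeasurePreserving Measure.quasiMeasurePreserving_fst).mul
          ((measurable_one.indicator hset).aemeasurable)
    _ ≤ ∫⁻ s in Set.Ioi (0:ℝ), volume {z | s < Φ z} * M := by
        refine lintegral_mono_ae ?_
        rw [ae_restrict_iff' measurableSet_Ioi]
        refine Filter.Eventually.of_forall fun s hs => ?_
        have heq : ∫⁻ z, G z * (Set.Iio (Φ z)).indicator (fun _ => (1:ℝ≥0∞)) s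
            = ∫⁻ z in {z | s < Φ z}, G z := by
          rw [← lintegral_indicator (hmeasset s) G]
          refine lintegral_congr fun z => ?_
          by_cases h : s < Φ z <;>
            simp [Set.indicator_apply, h]
        rw [heq]
        exact core s hs
    _ = (∫⁻ s in Set.Ioi (0:ℝ), volume {z | s < Φ z}) * M := by
        have hanti : Antitone (fun s : ℝ => volume {z | s < Φ z}) := by
          intro a b hab
          exact measure_mono fun z hz => lt_of_le_of_lt hab hz
        exact lintegral_mul_const'' M hanti.measurable.aemeasurable
    _ = (∫⁻ z, ENNReal.ofReal (Φ z)) * M := by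
        rw [← lintegral_eq_lintegral_meas_lt volume
          (Filter.Eventually.of_forall hΦ0) hΦm.aemeasurable]

set_option maxHeartbeats 1000000 in
/-- Multilinear majorant bound: if `φ : ℝ^{κn} → ℂ` has an integrable radially decreasing
majorant `Φ`, and `φ_t(y) = t^{-κn} φ(y/t)`, then
`sup_{t>0} |((f₁ ⊗ ⋯ ⊗ f_κ) ∗ φ_t)(x,…,x)| ≤ ‖Φ‖_{L¹} · M^κ(f₁,...,f_κ)(x)`. -/
theorem multilinear_majorant_bound {n κ : ℕ} (hn : 1 ≤ n) (hκ : 1 ≤ κ)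
    (φ : EuclideanSpace ℝ (Fin κ × Fin n) → ℂ)
    (Φ : EuclideanSpace ℝ (Fin κ × Fin n) → ℝ) (Φ₀ : ℝ → ℝ)
    (hmaj : ∀ y, ‖φ y‖ ≤ Φ y) (hrad : ∀ y, Φ y = Φ₀ ‖y‖)
    (hdecr : ∀ a b : ℝ, 0 ≤ a → a ≤ b → Φ₀ b ≤ Φ₀ a)
    (hΦ : Integrable Φ volume)
    (f : Fin κ → EuclideanSpace ℝ (Fin n) → ℂ)
    (hf : ∀ i, LocallyIntegrable (f i) volume) (x : EuclideanSpace ℝ (Fin n)) :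
    (⨆ t > (0 : ℝ),
        (‖∫ y : EuclideanSpace ℝ (Fin κ × Fin n),
            (∏ i, f i (x - block y i)) * (t ^ (κ * n) : ℝ)⁻¹ * φ (t⁻¹ • y)‖₊ : ℝ≥0∞)) ≤
      (∫⁻ y, (‖Φ y‖₊ : ℝ≥0∞)) * multiHLMax f x := by
  classical
  have hΦ0 : ∀ y, 0 ≤ Φ y := fun y => (norm_nonneg _).trans (hmaj y)
  have hΦm : Measurable Φ := by
    have h : Φ = (fun s : ℝ => Φ₀ (max s 0))
        ∘ (fun y : EuclideanSpace ℝ (Fin κ × Fin n) => ‖y‖) := by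
      funext y
      simp only [Function.comp]
      rw [hrad y, max_eq_left (norm_nonneg y)]
    rw [h]
    exact (Antitone.measurable fun a b hab =>
      hdecr _ _ (le_max_right _ _) (max_le_max hab le_rfl)).comp measurable_norm
  have hIeq : ∫⁻ y, (‖Φ y‖₊ : ℝ≥0∞) = ∫⁻ y, ENNReal.ofReal (Φ y) :=
    lintegral_congr fun y => Real.enorm_eq_ofReal (hΦ0 y)
  have hΦfin : ∫⁻ y, ENNReal.ofReal (Φ y) ≠ ∞ := by
    rw [← hIeq]
    exact hΦ.hasFiniteIntegral.ne
  have hd : Module.finrank ℝ (EuclideanSpace ℝ (Fin κ × Fin n)) = κ * n := by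
    simp [finrank_euclideanSpace]
  have hdpos : 0 < κ * n := Nat.mul_pos hκ hn
  refine iSup_le fun t => iSup_le fun ht => ?_
  have htpow : (0:ℝ) < t ^ (κ * n) := pow_pos ht _
  have hnorm : ∀ y : EuclideanSpace ℝ (Fin κ × Fin n),
      (‖(∏ i, f i (x - block y i)) * (t ^ (κ * n) : ℝ)⁻¹ * φ (t⁻¹ • y)‖₊ : ℝ≥0∞)
      = ENNReal.ofReal ((t ^ (κ * n))⁻¹) *
          ((∏ i, (‖f i (x - block y i)‖₊ : ℝ≥0∞)) * (‖φ (t⁻¹ • y)‖₊ : ℝ≥0∞)) := by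
    intro y
    rw [nnnorm_mul, nnnorm_mul, nnnorm_prod, Complex.nnnorm_real]
    push_cast
    rw [← enorm_eq_nnnorm ((t ^ (κ * n))⁻¹ : ℝ), Real.enorm_eq_ofReal (by positivity)]
    ring
  calc (‖∫ y : EuclideanSpace ℝ (Fin κ × Fin n),
          (∏ i, f i (x - block y i)) * (t ^ (κ * n) : ℝ)⁻¹ * φ (t⁻¹ • y)‖₊ : ℝ≥0∞)
      ≤ ∫⁻ y, (‖(∏ i, f i (x - block y i)) * (t ^ (κ * n) : ℝ)⁻¹ * φ (t⁻¹ • y)‖₊ : ℝ≥0∞) :=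
        enorm_integral_le_lintegral_enorm _
    _ = ENNReal.ofReal ((t ^ (κ * n))⁻¹) *
          ∫⁻ y, (∏ i, (‖f i (x - block y i)‖₊ : ℝ≥0∞)) * (‖φ (t⁻¹ • y)‖₊ : ℝ≥0∞) := by
        rw [← lintegral_const_mul' _ _ ENNReal.ofReal_ne_top]
        exact lintegral_congr hnorm
    _ = ENNReal.ofReal ((t ^ (κ * n))⁻¹) * (ENNReal.ofReal (t ^ (κ * n)) *
          ∫⁻ z, (∏ i, (‖f i (x - t • block z i)‖₊ : ℝ≥0∞)) * (‖φ z‖₊ : ℝ≥0∞)) := by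
        congr 1
        have hs := lintegral_eq_smul_comp (ι := Fin κ × Fin n) ht
          (fun y => (∏ i, (‖f i (x - block y i)‖₊ : ℝ≥0∞)) * (‖φ (t⁻¹ • y)‖₊ : ℝ≥0∞))
        rw [hd] at hs
        rw [hs]
        congr 1
        refine lintegral_congr fun z => ?_
        rw [inv_smul_smul₀ ht.ne']
        simp only [block_smul]
    _ = ∫⁻ z, (∏ i, (‖f i (x - t • block z i)‖₊ : ℝ≥0∞)) * (‖φ z‖₊ : ℝ≥0∞) := by
        rw [← mul_assoc, ← ENNReal.ofReal_mul (by positivity),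
          inv_mul_cancel₀ htpow.ne', ENNReal.ofReal_one, one_mul]
    _ ≤ ∫⁻ z, (∏ i, (‖f i (x - t • block z i)‖₊ : ℝ≥0∞)) * ENNReal.ofReal (Φ z) := by
        refine lintegral_mono fun z => mul_le_mul_right ?_ _
        rw [← enorm_eq_nnnorm, ← ofReal_norm_eq_enorm]
        exact ENNReal.ofReal_le_ofReal (hmaj _)
    _ ≤ (∫⁻ y, ENNReal.ofReal (Φ y)) * multiHLMax f x :=
        key_bound hn hκ Φ Φ₀ hrad hdecr hΦ0 hΦm hΦfin f hf x ht
    _ = (∫⁻ y, (‖Φ y‖₊ : ℝ≥0∞)) * multiHLMax f x := by rw [hIeq]
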